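/- With U as above (U_i = V_i - sum_{j<i} V_j/(n-j) for i.i.d. standard Gaussians V_j) and Z̃_i = Z_i - (1/n) sum_k Z_k for i.i.d. standard Gaussians Z_k, let σ̃_{ij} = Cov(U_i,U_j) and σ_{ij} = Cov(Z̃_i,Z̃_j) (so σ_{ii} = (n-1)/n, σ_{ij} = -1/n for i≠j). Then sum_{i,j=1}^n |σ_{ij} - σ̃_{ij}| <= 3 + 2 sum_{k=2}^{n-1} 1/k, which is at most 3 sqrt(n). -/

import Mathlib

open MeasureTheory ProbabilityTheory Finset

section AuxGauss
open MeasureTheory ProbabilityTheory Real Filter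
open scoped NNReal ENNReal Topology


lemma integrable_x2_exp : Integrable (fun x : ℝ => x ^ 2 * Real.exp (-(2⁻¹:ℝ) * x ^ 2)) := by
  have := integrable_rpow_mul_exp_neg_mul_sq (b := 2⁻¹) (by norm_num) (s := 2) (by norm_num)
  simpa [Real.rpow_two] using this

lemma integral_gaussianReal_eq (g : ℝ → ℝ) :
    ∫ x, g x ∂(gaussianReal 0 1) = ∫ x, gaussianPDFReal 0 1 x * g x := by
  rw [gaussianReal_of_var_ne_zero _ one_ne_zero]
  have : (gaussianPDF 0 1) = fun x => ((Real.toNNReal (gaussianPDFReal 0 1 x) : ℝ≥0) : ℝ≥0∞) :=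
    rfl
  rw [this, integral_withDensity_eq_integral_smul]
  · refine integral_congr_ae (Filter.Eventually.of_forall fun x => ?_)
    simp [NNReal.smul_def, Real.coe_toNNReal _ (gaussianPDFReal_nonneg 0 1 x)]
  · exact (measurable_gaussianPDFReal 0 1).real_toNNReal

lemma tendsto_xexp_atTop : Tendsto (fun x : ℝ => x * Real.exp (-(2⁻¹:ℝ) * x ^ 2)) atTop (𝓝 0) := by
  have h := rpow_mul_exp_neg_mul_sq_isLittleO_exp_neg (b := 2⁻¹) (by norm_num) 1
  have h2 : Tendsto (fun x : ℝ => Real.exp (-(1/2) * x)) atTop (𝓝 0) := by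
    apply Real.tendsto_exp_atBot.comp
    have h1 : Tendsto (fun x : ℝ => (1/2 : ℝ) * x) atTop atTop :=
      tendsto_id.const_mul_atTop (by norm_num)
    exact (tendsto_neg_atTop_atBot.comp h1).congr fun x => by simp [Function.comp]
  have := h.tendsto_zero_of_tendsto h2
  simpa [Real.rpow_one] using this

lemma tendsto_xexp_atBot : Tendsto (fun x : ℝ => x * Real.exp (-(2⁻¹:ℝ) * x ^ 2)) atBot (𝓝 0) := by
  rw [show (atBot : Filter ℝ) = Filter.map Neg.neg atTop from (Filter.map_neg_atTop).symm,
    Filter.tendsto_map'_iff]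
  have := tendsto_xexp_atTop.neg
  simp only [neg_zero] at this
  refine this.congr fun x => ?_
  simp [Function.comp]

lemma tendsto_exp_sq_atTop : Tendsto (fun x : ℝ => Real.exp (-(2⁻¹:ℝ) * x ^ 2)) atTop (𝓝 0) := by
  apply Real.tendsto_exp_atBot.comp
  have h0 : Tendsto (fun x : ℝ => x ^ 2) atTop atTop := tendsto_pow_atTop (by norm_num)
  have h1 : Tendsto (fun x : ℝ => (2⁻¹ : ℝ) * x ^ 2) atTop atTop :=
    h0.const_mul_atTop (by norm_num)
  exact (tendsto_neg_atTop_atBot.comp h1).congr fun x => by simp [Function.comp]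

lemma tendsto_exp_sq_atBot : Tendsto (fun x : ℝ => Real.exp (-(2⁻¹:ℝ) * x ^ 2)) atBot (𝓝 0) := by
  rw [show (atBot : Filter ℝ) = Filter.map Neg.neg atTop from (Filter.map_neg_atTop).symm,
    Filter.tendsto_map'_iff]
  refine tendsto_exp_sq_atTop.congr fun x => by simp [Function.comp]

lemma integral_x_exp : ∫ x : ℝ, x * Real.exp (-(2⁻¹:ℝ) * x ^ 2) = 0 := by
  have hderiv : ∀ x : ℝ, HasDerivAt (fun y : ℝ => -Real.exp (-(2⁻¹:ℝ) * y ^ 2))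
      (x * Real.exp (-(2⁻¹:ℝ) * x ^ 2)) x := by
    intro x
    have h1 : HasDerivAt (fun y : ℝ => -(2⁻¹:ℝ) * y ^ 2) (-(2⁻¹:ℝ) * (2 * x)) x :=
      ((hasDerivAt_pow 2 x).const_mul _).congr_deriv (by ring)
    have := (h1.exp).neg
    exact this.congr_deriv (by ring)
  have hint : Integrable (fun x : ℝ => x * Real.exp (-(2⁻¹:ℝ) * x ^ 2)) :=
    integrable_mul_exp_neg_mul_sq (by norm_num)
  have := integral_of_hasDerivAt_of_tendsto hderiv hint
    (tendsto_exp_sq_atBot.neg.congr' (by filter_upwards with x; rfl))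
    (tendsto_exp_sq_atTop.neg.congr' (by filter_upwards with x; rfl))
  simpa using this

lemma integral_x2_exp : ∫ x : ℝ, x ^ 2 * Real.exp (-(2⁻¹:ℝ) * x ^ 2) = Real.sqrt (2 * Real.pi) := by
  have hderiv : ∀ x : ℝ, HasDerivAt (fun y : ℝ => -y * Real.exp (-(2⁻¹:ℝ) * y ^ 2))
      (x ^ 2 * Real.exp (-(2⁻¹:ℝ) * x ^ 2) - Real.exp (-(2⁻¹:ℝ) * x ^ 2)) x := by
    intro x
    have h1 : HasDerivAt (fun y : ℝ => -(2⁻¹:ℝ) * y ^ 2) (-x) x :=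
      ((hasDerivAt_pow 2 x).const_mul _).congr_deriv (by ring)
    have h2 := h1.exp
    have h3 : HasDerivAt (fun y : ℝ => -y) (-1 : ℝ) x := (hasDerivAt_id x).neg
    have := h3.mul h2
    exact this.congr_deriv (by ring)
  have hint : Integrable (fun x : ℝ => x ^ 2 * Real.exp (-(2⁻¹:ℝ) * x ^ 2)
      - Real.exp (-(2⁻¹:ℝ) * x ^ 2)) :=
    integrable_x2_exp.sub (integrable_exp_neg_mul_sq (by norm_num))
  have hbot : Tendsto (fun x : ℝ => -x * Real.exp (-(2⁻¹:ℝ) * x ^ 2)) atBot (𝓝 0) := by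
    have := tendsto_xexp_atBot.neg
    simp only [neg_zero] at this
    exact this.congr fun x => by ring
  have htop : Tendsto (fun x : ℝ => -x * Real.exp (-(2⁻¹:ℝ) * x ^ 2)) atTop (𝓝 0) := by
    have := tendsto_xexp_atTop.neg
    simp only [neg_zero] at this
    exact this.congr fun x => by ring
  have h0 := integral_of_hasDerivAt_of_tendsto hderiv hint hbot htop
  simp only [sub_zero] at h0
  have hsplit := integral_sub integrable_x2_exp (integrable_exp_neg_mul_sq (b := 2⁻¹) (by norm_num))
  rw [hsplit] at h0
  have hg : ∫ x : ℝ, Real.exp (-(2⁻¹:ℝ) * x ^ 2) = Real.sqrt (2 * Real.pi) := by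
    rw [integral_gaussian]
    norm_num [div_eq_mul_inv, mul_comm]
  linarith [h0, hg]

lemma gaussianPDFReal_zero_one (x : ℝ) :
    gaussianPDFReal 0 1 x = (Real.sqrt (2 * Real.pi))⁻¹ * Real.exp (-(2⁻¹:ℝ) * x ^ 2) := by
  rw [gaussianPDFReal_def]
  norm_num
  left; ring

lemma gauss_m1 : ∫ x, x ∂(gaussianReal 0 1) = 0 := by
  rw [integral_gaussianReal_eq]
  have : ∀ x : ℝ, gaussianPDFReal 0 1 x * x
      = (Real.sqrt (2 * Real.pi))⁻¹ * (x * Real.exp (-(2⁻¹:ℝ) * x ^ 2)) := by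
    intro x; rw [gaussianPDFReal_zero_one]; ring
  simp_rw [this, integral_const_mul, integral_x_exp, mul_zero]

lemma gauss_m2 : ∫ x, x ^ 2 ∂(gaussianReal 0 1) = 1 := by
  rw [integral_gaussianReal_eq]
  have : ∀ x : ℝ, gaussianPDFReal 0 1 x * x ^ 2
      = (Real.sqrt (2 * Real.pi))⁻¹ * (x ^ 2 * Real.exp (-(2⁻¹:ℝ) * x ^ 2)) := by
    intro x; rw [gaussianPDFReal_zero_one]; ring
  simp_rw [this, integral_const_mul, integral_x2_exp]
  rw [inv_mul_cancel₀]
  positivity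

lemma gauss_memL2 : MemLp (id : ℝ → ℝ) 2 (gaussianReal 0 1) := by
  rw [memLp_two_iff_integrable_sq aestronglyMeasurable_id]
  rw [gaussianReal_of_var_ne_zero _ one_ne_zero]
  have hrepr : (gaussianPDF 0 1) = fun x => ((Real.toNNReal (gaussianPDFReal 0 1 x) : ℝ≥0) : ℝ≥0∞) :=
    rfl
  rw [hrepr, integrable_withDensity_iff_integrable_coe_smul
    ((measurable_gaussianPDFReal 0 1).real_toNNReal)]
  have : ∀ x : ℝ, (Real.toNNReal (gaussianPDFReal 0 1 x) : ℝ) • (id x) ^ 2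
      = (Real.sqrt (2 * Real.pi))⁻¹ * (x ^ 2 * Real.exp (-(2⁻¹:ℝ) * x ^ 2)) := by
    intro x
    rw [smul_eq_mul, Real.coe_toNNReal _ (gaussianPDFReal_nonneg 0 1 x),
      gaussianPDFReal_zero_one]
    simp; ring
  simp_rw [this]
  exact integrable_x2_exp.const_mul _

end AuxGauss

section AuxArith
open Finset

-- triangle sum swap
lemma tri_swap (N : ℕ) (f g : ℕ → ℝ) :
    ∑ i ∈ range N, f i * ∑ k ∈ range i, g k
      = ∑ k ∈ range N, g k * ∑ i ∈ Ico (k + 1) N, f i := by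
  induction N with
  | zero => simp
  | succ N ih =>
    rw [Finset.sum_range_succ, ih, Finset.sum_range_succ]
    have h1 : ∀ k ∈ range N, g k * ∑ i ∈ Ico (k+1) (N+1), f i
        = g k * ∑ i ∈ Ico (k+1) N, f i + g k * f N := by
      intro k hk
      rw [Finset.sum_Ico_succ_top (by have := Finset.mem_range.mp hk; omega : k + 1 ≤ N) f]
      ring
    rw [Finset.sum_congr rfl h1, Finset.sum_add_distrib]
    have h2 : Ico (N+1) (N+1) = ∅ := by simp
    rw [h2]
    simp [Finset.sum_mul, Finset.mul_sum]
    ring_nf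

lemma gauss_sum_cast (m : ℕ) : ∑ i ∈ range m, (i : ℝ) = m * (m - 1) / 2 := by
  induction m with
  | zero => simp
  | succ m ih => rw [Finset.sum_range_succ, ih]; push_cast; ring


lemma sum_lin (a : ℝ) (m : ℕ) : ∑ i ∈ range m, (a - (i:ℝ)) = m * a - m*((m:ℝ)-1)/2 := by
  induction m with
  | zero => simp
  | succ m ih => rw [Finset.sum_range_succ, ih]; push_cast; ring

lemma cast_pred (n : ℕ) (hn : 1 ≤ n) : ((n - 1 : ℕ) : ℝ) = (n:ℝ) - 1 := by
  push_cast [Nat.cast_sub hn]; ring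

lemma sum_ones (n : ℕ) (hn : 1 ≤ n) : ∑ _i ∈ range (n-1), (1:ℝ) = (n:ℝ) - 1 := by
  rw [Finset.sum_const, Finset.card_range, nsmul_eq_mul, mul_one, cast_pred n hn]

lemma xpos (n k : ℕ) (hk : k < n - 1) : (0:ℝ) < (n:ℝ) - 1 - k := by
  have : (k:ℝ) + 1 < (n:ℝ) := by exact_mod_cast (by omega : k + 1 < n)
  linarith

lemma sum_T (n : ℕ) (hn : 1 ≤ n) :
    ∑ i ∈ range n, (∑ k ∈ range i, ((((n:ℝ) - 1 - k))⁻¹)^2)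
      = ∑ k ∈ range (n-1), ((n:ℝ) - 1 - k)⁻¹ := by
  have h0 : ∀ i ∈ range n, (∑ k ∈ range i, ((((n:ℝ) - 1 - k))⁻¹)^2)
      = (1:ℝ) * ∑ k ∈ range i, ((((n:ℝ) - 1 - k))⁻¹)^2 := fun i _ => (one_mul _).symm
  rw [Finset.sum_congr rfl h0, tri_swap]
  have hsplit : n = (n - 1) + 1 := by omega
  rw [hsplit, Finset.sum_range_succ, ← hsplit]
  have hlast : ((((n:ℝ) - 1 - (n-1:ℕ)))⁻¹)^2 * ∑ i ∈ Ico n n, (1:ℝ) = 0 := by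
    simp
  rw [hlast, add_zero]
  refine Finset.sum_congr rfl fun k hk => ?_
  have hk' : k < n - 1 := Finset.mem_range.mp hk
  have hx := xpos n k hk'
  rw [Finset.sum_const, Nat.card_Ico, nsmul_eq_mul, mul_one]
  have hcast : ((n - (k+1) : ℕ) : ℝ) = (n:ℝ) - 1 - k := by
    push_cast [Nat.cast_sub (by omega : k + 1 ≤ n)]
    ring
  rw [hcast]
  field_simp

lemma sum_B (n : ℕ) (hn : 1 ≤ n) :
    ∑ i ∈ range (n-1), ((n:ℝ) - 1 - i) *
      (((n:ℝ) - 1 - i)⁻¹ - (n:ℝ)⁻¹ - ∑ k ∈ range i, ((((n:ℝ) - 1 - k))⁻¹)^2)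
      = (∑ k ∈ range (n-1), ((n:ℝ) - 1 - k)⁻¹) / 2 := by
  have hexp : ∀ i ∈ range (n-1), ((n:ℝ) - 1 - i) *
      (((n:ℝ) - 1 - i)⁻¹ - (n:ℝ)⁻¹ - ∑ k ∈ range i, ((((n:ℝ) - 1 - k))⁻¹)^2)
      = 1 - ((n:ℝ) - 1 - i) * (n:ℝ)⁻¹
        - ((n:ℝ) - 1 - i) * ∑ k ∈ range i, ((((n:ℝ) - 1 - k))⁻¹)^2 := by
    intro i hi
    have hx := xpos n i (Finset.mem_range.mp hi)
    field_simp
  rw [Finset.sum_congr rfl hexp, Finset.sum_sub_distrib, Finset.sum_sub_distrib, tri_swap]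
  have hS2 : ∑ i ∈ range (n-1), ((n:ℝ) - 1 - i) * (n:ℝ)⁻¹
      = (((n:ℝ)-1) * ((n:ℝ)-1) - ((n:ℝ)-1)*(((n:ℝ)-1)-1)/2) * (n:ℝ)⁻¹ := by
    rw [← Finset.sum_mul, sum_lin ((n:ℝ)-1) (n-1), cast_pred n hn]
  have hS3 : ∀ k ∈ range (n-1), ((((n:ℝ) - 1 - k))⁻¹)^2 * ∑ i ∈ Ico (k+1) (n-1), ((n:ℝ) - 1 - i)
      = 1/2 - ((n:ℝ) - 1 - k)⁻¹ / 2 := by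
    intro k hk
    have hk' : k < n - 1 := Finset.mem_range.mp hk
    have hx := xpos n k hk'
    have hinner : ∑ i ∈ Ico (k+1) (n-1), ((n:ℝ) - 1 - (i:ℝ))
        = ((n:ℝ) - 2 - k) * ((n:ℝ) - 1 - k) / 2 := by
      rw [Finset.sum_Ico_eq_sub _ (by omega : k + 1 ≤ n - 1),
        sum_lin ((n:ℝ)-1) (n-1), sum_lin ((n:ℝ)-1) (k+1), cast_pred n hn]
      push_cast
      ring
    rw [hinner]
    field_simp
    ring
  rw [Finset.sum_congr rfl hS3, Finset.sum_sub_distrib, sum_ones n hn, hS2]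
  have hn0 : (n:ℝ) ≠ 0 := by positivity
  have hhalf : ∑ _k ∈ range (n-1), (1/2 : ℝ) = ((n:ℝ) - 1)/2 := by
    rw [Finset.sum_const, Finset.card_range, nsmul_eq_mul, cast_pred n hn]
    ring
  rw [hhalf, ← Finset.sum_div]
  field_simp
  ring


lemma H_eq (n : ℕ) (hn : 2 ≤ n) :
    ∑ k ∈ range (n-1), ((n:ℝ) - 1 - k)⁻¹ = 1 + ∑ k ∈ Icc 2 (n-1), (1:ℝ)/k := by
  have h1 : ∑ k ∈ range (n-1), ((n:ℝ) - 1 - k)⁻¹ = ∑ k ∈ range (n-1), ((k:ℝ) + 1)⁻¹ := by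
    rw [← Finset.sum_range_reflect]
    refine Finset.sum_congr rfl fun k hk => ?_
    have hk' : k < n - 1 := Finset.mem_range.mp hk
    congr 1
    have hc : (n - 1 - 1 - k : ℕ) = n - (k+2) := by omega
    rw [hc, Nat.cast_sub (by omega : k + 2 ≤ n)]
    push_cast
    ring
  have h2 : ∑ k ∈ range (n-1), ((k:ℝ) + 1)⁻¹ = ∑ j ∈ Icc 1 (n-1), ((j:ℝ))⁻¹ := by
    have hIccIco : Icc 1 (n-1) = Ico 1 n := by
      ext x; simp only [Finset.mem_Icc, Finset.mem_Ico]; omega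
    rw [hIccIco, Finset.sum_Ico_eq_sum_range]
    have hb : n - 1 = n - 1 := rfl
    refine Finset.sum_congr rfl fun k _ => ?_
    push_cast
    ring_nf
  have h3 : Icc 1 (n-1) = insert 1 (Icc 2 (n-1)) := by
    ext x; simp only [Finset.mem_Icc, Finset.mem_insert]; omega
  rw [h1, h2, h3, Finset.sum_insert (by simp)]
  simp [one_div]

lemma D_nonneg (n : ℕ) : ∀ m, m + 2 ≤ n →
    0 ≤ ((n:ℝ) - 1 - m)⁻¹ - (n:ℝ)⁻¹ - ∑ k ∈ range m, ((((n:ℝ) - 1 - k))⁻¹)^2 := by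
  intro m
  induction m with
  | zero =>
    intro h
    simp only [Finset.range_zero, Finset.sum_empty, Nat.cast_zero, sub_zero]
    have h2 : (0:ℝ) < (n:ℝ) - 1 := by
      have : (2:ℝ) ≤ (n:ℝ) := by exact_mod_cast h
      linarith
    have := one_div_le_one_div_of_le h2 (by linarith : (n:ℝ) - 1 ≤ (n:ℝ))
    simp only [one_div] at this
    linarith
  | succ m ih =>
    intro h
    have ihm := ih (by omega)
    rw [Finset.sum_range_succ]
    have hx : (2:ℝ) ≤ (n:ℝ) - 1 - m := by
      have : (m:ℝ) + 3 ≤ (n:ℝ) := by exact_mod_cast (by omega : m + 3 ≤ n)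
      linarith
    set x : ℝ := (n:ℝ) - 1 - m with hxdef
    have hstep : ((n:ℝ) - 1 - (m+1:ℕ))⁻¹ - x⁻¹ - (x⁻¹)^2 = ((x-1) * x^2)⁻¹ := by
      have h1 : ((n:ℝ) - 1 - (m+1:ℕ)) = x - 1 := by push_cast; rw [hxdef]; ring
      rw [h1]
      have hx0 : x ≠ 0 := by linarith
      have hx1 : x - 1 ≠ 0 := by linarith
      field_simp
      ring
    have hpos : (0:ℝ) ≤ ((x-1) * x^2)⁻¹ := by
      have : (0:ℝ) < (x-1) * x^2 := by nlinarith
      positivity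
    nlinarith [ihm, hstep, hpos]

lemma sqrt_ge_num {a b : ℝ} (ha : 0 ≤ b) (h : b^2 ≤ a) : b ≤ Real.sqrt a := by
  rw [show b = Real.sqrt (b^2) from (Real.sqrt_sq ha).symm]
  exact Real.sqrt_le_sqrt h

lemma part2 (n : ℕ) (hn : 1 ≤ n) :
    3 + 2 * (∑ k ∈ Finset.Icc 2 (n - 1), (1 : ℝ) / k) ≤ 3 * Real.sqrt n := by
  rcases le_or_gt n 4 with h4 | h4
  · interval_cases n
    · simp
    · have h1 : (1.41:ℝ) ≤ Real.sqrt 2 := sqrt_ge_num (by norm_num) (by norm_num)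
      have h2 : Finset.Icc 2 1 = (∅ : Finset ℕ) := by decide
      rw [h2]
      push_cast
      norm_num
    · have h1 : (1.73:ℝ) ≤ Real.sqrt 3 := sqrt_ge_num (by norm_num) (by norm_num)
      have h2 : Finset.Icc 2 2 = ({2} : Finset ℕ) := by decide
      rw [h2, Finset.sum_singleton]
      push_cast
      nlinarith
    · have h1 : (2:ℝ) ≤ Real.sqrt 4 := sqrt_ge_num (by norm_num) (by norm_num)
      have h2 : Finset.Icc 2 3 = ({2, 3} : Finset ℕ) := by decide
      rw [h2, Finset.sum_insert (by decide), Finset.sum_singleton]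
      push_cast
      nlinarith
  · -- n ≥ 5
    have hsplit : ∑ k ∈ Finset.Icc 2 (n-1), (1:ℝ)/k
        = (1/2 + 1/3) + ∑ k ∈ Finset.Ico 4 n, (1:ℝ)/k := by
      have hIcc : Finset.Icc 2 (n-1) = Finset.Ico 2 n := by
        ext x; simp only [Finset.mem_Icc, Finset.mem_Ico]; omega
      rw [hIcc, ← Finset.sum_Ico_consecutive _ (by omega : 2 ≤ 4) (by omega : 4 ≤ n)]
      congr 1
      rw [show Finset.Ico (2:ℕ) 4 = ({2, 3} : Finset ℕ) from (by decide),
        Finset.sum_insert (by decide), Finset.sum_singleton]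
      norm_num
    have htel : ∑ k ∈ Finset.Ico 4 n, (Real.sqrt k - Real.sqrt ((k:ℝ)-1))
        = Real.sqrt ((n:ℝ)-1) - Real.sqrt 3 := by
      rw [Finset.sum_Ico_eq_sum_range]
      have hre : ∀ i ∈ Finset.range (n-4),
          (Real.sqrt ((4+i:ℕ)) - Real.sqrt (((4+i:ℕ):ℝ)-1))
          = Real.sqrt (((i+1:ℕ):ℝ) + 3) - Real.sqrt (((i:ℕ):ℝ) + 3) := by
        intro i _
        have hA : ((4+i:ℕ):ℝ) - 1 = ((i:ℕ):ℝ) + 3 := by push_cast; ring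
        have hB : ((4+i:ℕ):ℝ) = ((i+1:ℕ):ℝ) + 3 := by push_cast; ring
        rw [hA, hB]
      rw [Finset.sum_congr rfl hre,
        Finset.sum_range_sub (fun j : ℕ => Real.sqrt ((j:ℝ) + 3))]
      have hC : ((n - 4 : ℕ):ℝ) + 3 = (n:ℝ) - 1 := by
        push_cast [Nat.cast_sub (by omega : 4 ≤ n)]; ring
      rw [hC]
      norm_num
    have hle : ∑ k ∈ Finset.Ico 4 n, (1:ℝ)/k
        ≤ ∑ k ∈ Finset.Ico 4 n, (Real.sqrt k - Real.sqrt ((k:ℝ)-1)) := by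
      refine Finset.sum_le_sum fun k hk => ?_
      have hk4 : 4 ≤ k := (Finset.mem_Ico.mp hk).1
      have hk4' : (4:ℝ) ≤ (k:ℝ) := by exact_mod_cast hk4
      have hs1 : Real.sqrt k ≤ (k:ℝ)/2 := by
        have e1 : Real.sqrt k * Real.sqrt k = (k:ℝ) := Real.mul_self_sqrt (by linarith)
        have e0 : 0 ≤ Real.sqrt k := Real.sqrt_nonneg _
        nlinarith [sq_nonneg (Real.sqrt k - 2)]
      have hs2 : Real.sqrt ((k:ℝ)-1) ≤ Real.sqrt k := Real.sqrt_le_sqrt (by linarith)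
      have hkey : (Real.sqrt k - Real.sqrt ((k:ℝ)-1)) * (Real.sqrt k + Real.sqrt ((k:ℝ)-1))
          = 1 := by
        have e1 : Real.sqrt k * Real.sqrt k = (k:ℝ) := Real.mul_self_sqrt (by linarith)
        have e2 : Real.sqrt ((k:ℝ)-1) * Real.sqrt ((k:ℝ)-1) = (k:ℝ)-1 :=
          Real.mul_self_sqrt (by linarith)
        nlinarith [e1, e2]
      have hsum_pos : 0 < Real.sqrt k + Real.sqrt ((k:ℝ)-1) := by
        have : 0 < Real.sqrt k := Real.sqrt_pos.mpr (by linarith)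
        have := Real.sqrt_nonneg ((k:ℝ)-1)
        linarith
      have hsum_le : Real.sqrt k + Real.sqrt ((k:ℝ)-1) ≤ (k:ℝ) := by linarith
      have hk_pos : (0:ℝ) < (k:ℝ) := by linarith
      rw [div_le_iff₀ hk_pos]
      calc (1:ℝ) = (Real.sqrt k - Real.sqrt ((k:ℝ)-1))
            * (Real.sqrt k + Real.sqrt ((k:ℝ)-1)) := hkey.symm
        _ ≤ (Real.sqrt k - Real.sqrt ((k:ℝ)-1)) * k := by
            have hpos : 0 ≤ Real.sqrt k - Real.sqrt ((k:ℝ)-1) := by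
              nlinarith [hkey, hsum_pos]
            exact mul_le_mul_of_nonneg_left hsum_le hpos
    have h3 : (1.73:ℝ) ≤ Real.sqrt 3 := sqrt_ge_num (by norm_num) (by norm_num)
    have h5 : (2.2:ℝ) ≤ Real.sqrt n := by
      refine sqrt_ge_num (by norm_num) ?_
      have : (5:ℝ) ≤ (n:ℝ) := by exact_mod_cast (by omega : 5 ≤ n)
      nlinarith
    have hmon : Real.sqrt ((n:ℝ)-1) ≤ Real.sqrt n := Real.sqrt_le_sqrt (by linarith)
    rw [hsplit]
    linarith [hle, htel]

end AuxArith

section AuxMeas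
open MeasureTheory

lemma mul_integrable_of_L2 {α : Type*} [MeasurableSpace α] {μ : Measure α} {f g : α → ℝ}
    (hf : MemLp f 2 μ) (hg : MemLp g 2 μ) : Integrable (fun x => f x * g x) μ := by
  have hint : Integrable (fun x => 2⁻¹ * (f x ^ 2 + g x ^ 2)) μ :=
    (hf.integrable_sq.add hg.integrable_sq).const_mul _
  refine hint.mono' (hf.aestronglyMeasurable.mul hg.aestronglyMeasurable)
    (Filter.Eventually.of_forall fun x => ?_)
  rw [Real.norm_eq_abs, abs_mul]
  nlinarith [sq_nonneg (|f x| - |g x|), sq_abs (f x), sq_abs (g x), abs_nonneg (f x),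
    abs_nonneg (g x), abs_nonneg (f x * g x)]

lemma fin_filter_sum {n : ℕ} (i : Fin n) (g : ℕ → ℝ) :
    ∑ k ∈ Finset.univ.filter (fun k : Fin n => k < i), g k.val
      = ∑ m ∈ Finset.range i.val, g m := by
  rw [Finset.sum_filter]
  have h1 : ∀ k : Fin n, (if k < i then g k.val else 0)
      = (fun m : ℕ => if m < i.val then g m else 0) k.val := by
    intro k
    simp only [Fin.lt_def]
  rw [Finset.sum_congr rfl fun k _ => h1 k,
    Fin.sum_univ_eq_sum_range (fun m : ℕ => if m < i.val then g m else 0) n,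
    ← Finset.sum_filter]
  congr 1
  ext x
  simp only [Finset.mem_filter, Finset.mem_range]
  have := i.isLt
  omega

end AuxMeas

/-- Total entrywise discrepancy between the covariance matrix `St` of
`U i = V i - ∑_{j<i} V j/(n-1-j)` (zero-based, matching `Vᵢ - ∑_{j<i} Vⱼ/(n-j)` one-based,
for i.i.d. standard Gaussians `V`) and the covariance matrix `S` of the centered Gaussian
vector `Z̃ᵢ = Zᵢ - Z̄` (so `Sᵢᵢ = (n-1)/n`, `Sᵢⱼ = -1/n` for `i ≠ j`):
`∑_{i,j} |Sᵢⱼ - Stᵢⱼ| ≤ 3 + 2 ∑_{k=2}^{n-1} 1/k ≤ 3 √n`. -/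
theorem cov_discrepancy_bound
    {Ω : Type*} [MeasureSpace Ω] [IsProbabilityMeasure (ℙ : Measure Ω)]
    {n : ℕ} (hn : 1 ≤ n) (V : Fin n → Ω → ℝ)
    (hVm : ∀ i, Measurable (V i))
    (hViid : iIndepFun V ℙ)
    (hVgauss : ∀ i, Measure.map (V i) ℙ = gaussianReal 0 1)
    (U : Fin n → Ω → ℝ)
    (hU : ∀ i ω, U i ω = V i ω
      - ∑ j ∈ Finset.univ.filter (· < i), V j ω / ((n : ℝ) - 1 - j))
    (St S : Matrix (Fin n) (Fin n) ℝ)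
    (hSt : ∀ i j, St i j = ∫ ω, U i ω * U j ω ∂ℙ)
    (hS : ∀ i j, S i j = if i = j then ((n : ℝ) - 1) / n else -(1 / (n : ℝ))) :
    (∑ i, ∑ j, |S i j - St i j| ≤ 3 + 2 * ∑ k ∈ Finset.Icc 2 (n - 1), (1 : ℝ) / k)
    ∧ 3 + 2 * (∑ k ∈ Finset.Icc 2 (n - 1), (1 : ℝ) / k) ≤ 3 * Real.sqrt n := by
  classical
  have hn0 : (n:ℝ) ≠ 0 := Nat.cast_ne_zero.mpr (by omega)
  -- moments of V
  have hVL2 : ∀ i, MemLp (V i) 2 ℙ := by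
    intro i
    have h := gauss_memL2
    rw [← hVgauss i] at h
    have := (memLp_map_measure_iff aestronglyMeasurable_id (hVm i).aemeasurable).mp h
    simpa [Function.comp] using this
  have hz : ∀ k : Fin n, ∫ ω, V k ω ∂ℙ = 0 := by
    intro k
    have h : ∫ x, x ∂(Measure.map (V k) ℙ) = ∫ ω, V k ω ∂ℙ :=
      integral_map (hVm k).aemeasurable aestronglyMeasurable_id
    rw [← h, hVgauss k, gauss_m1]
  have horth : ∀ i j : Fin n, ∫ ω, V i ω * V j ω ∂ℙ = if i = j then 1 else 0 := by
    intro i j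
    by_cases hij : i = j
    · subst hij
      simp only [if_pos rfl]
      have h : ∫ x, x * x ∂(Measure.map (V i) ℙ) = ∫ ω, V i ω * V i ω ∂ℙ :=
        integral_map (hVm i).aemeasurable
          (measurable_id.mul measurable_id).aestronglyMeasurable
      rw [← h, hVgauss i]
      have h2 : ∫ x, x * x ∂(gaussianReal 0 1) = ∫ x, x ^ 2 ∂(gaussianReal 0 1) :=
        integral_congr_ae (Filter.Eventually.of_forall fun x => (sq x).symm)
      rw [h2, gauss_m2]
      simp
    · simp only [if_neg hij]
      have hind : IndepFun (V i) (V j) ℙ := hViid.indepFun hij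
      have h3 := hind.integral_fun_mul_eq_mul_integral ((hVL2 i).integrable one_le_two).aestronglyMeasurable
        ((hVL2 j).integrable one_le_two).aestronglyMeasurable
      rw [hz i, hz j, mul_zero] at h3
      exact h3
  have hmulint : ∀ i j : Fin n, Integrable (fun ω => V i ω * V j ω) ℙ := fun i j =>
    mul_integrable_of_L2 (hVL2 i) (hVL2 j)
  -- coefficients
  set c : ℕ → ℝ := fun k => ((n:ℝ) - 1 - k)⁻¹ with hc
  set T : ℕ → ℝ := fun m => ∑ k ∈ Finset.range m, (c k)^2 with hT
  set D : ℕ → ℝ := fun m => c m - (n:ℝ)⁻¹ - T m with hD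
  set a : Fin n → Fin n → ℝ := fun i k => if k = i then 1 else if k < i then -c k.val else 0
    with ha
  have hUa : ∀ (i : Fin n) (ω : Ω), U i ω = ∑ k, a i k * V k ω := by
    intro i ω
    rw [hU i ω]
    have hsplit : ∀ k : Fin n, a i k * V k ω
        = (if k = i then V k ω else 0)
          + (if k < i then -(V k ω / ((n:ℝ) - 1 - k.val)) else 0) := by
      intro k
      by_cases h1 : k = i
      · subst h1
        simp [ha, lt_irrefl]
      · by_cases h2 : k < i
        · simp only [ha, if_neg h1, if_pos h2, hc]
          rw [div_eq_mul_inv]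
          ring
        · simp [ha, h1, h2]
    rw [Finset.sum_congr rfl (fun k _ => hsplit k), Finset.sum_add_distrib,
      Finset.sum_ite_eq' Finset.univ i (fun k => V k ω), if_pos (Finset.mem_univ i),
      ← Finset.sum_filter]
    rw [show (∑ k ∈ Finset.univ.filter (fun k : Fin n => k < i), -(V k ω / ((n:ℝ) - 1 - k.val)))
        = -(∑ k ∈ Finset.univ.filter (fun k : Fin n => k < i), V k ω / ((n:ℝ) - 1 - k.val))
      from Finset.sum_neg_distrib _]
    rw [← sub_eq_add_neg]
  -- St as sum of products of coefficients
  have hSt' : ∀ i j, St i j = ∑ k, a i k * a j k := by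
    intro i j
    rw [hSt i j]
    have e1 : ∫ ω, U i ω * U j ω ∂ℙ
        = ∫ ω, ∑ k, ∑ l, (a i k * a j l) * (V k ω * V l ω) ∂ℙ := by
      refine integral_congr_ae (Filter.Eventually.of_forall fun ω => ?_)
      dsimp only
      rw [hUa i ω, hUa j ω, Finset.sum_mul_sum]
      exact Finset.sum_congr rfl fun k _ => Finset.sum_congr rfl fun l _ => by ring
    have e2 : ∫ ω, ∑ k, ∑ l, (a i k * a j l) * (V k ω * V l ω) ∂ℙ
        = ∑ k, ∑ l, (a i k * a j l) * ∫ ω, V k ω * V l ω ∂ℙ := by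
      rw [integral_finset_sum _ (fun k _ => integrable_finset_sum _
        (fun l _ => ((hmulint k l).const_mul _)))]
      refine Finset.sum_congr rfl fun k _ => ?_
      rw [integral_finset_sum _ (fun l _ => (hmulint k l).const_mul _)]
      exact Finset.sum_congr rfl fun l _ => integral_const_mul _ _
    rw [e1, e2]
    refine Finset.sum_congr rfl fun k _ => ?_
    have e3 : ∀ l : Fin n, (a i k * a j l) * ∫ ω, V k ω * V l ω ∂ℙ
        = if k = l then a i k * a j l else 0 := by
      intro l
      rw [horth k l]
      by_cases h : k = l <;> simp [h]
    rw [Finset.sum_congr rfl (fun l _ => e3 l), Finset.sum_ite_eq Finset.univ k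
      (fun l => a i k * a j l)]
    simp
  -- entry values
  have hdiag : ∀ i : Fin n, St i i = 1 + T i.val := by
    intro i
    rw [hSt' i i]
    have h1 : ∀ k : Fin n, a i k * a i k
        = (if k = i then 1 else 0) + (if k < i then (c k.val)^2 else 0) := by
      intro k
      by_cases h1 : k = i
      · subst h1; simp [ha, lt_irrefl]
      · by_cases h2 : k < i
        · simp only [ha, if_neg h1, if_pos h2]
          ring
        · simp [ha, h1, h2]
    rw [Finset.sum_congr rfl (fun k _ => h1 k), Finset.sum_add_distrib,
      Finset.sum_ite_eq' Finset.univ i (fun _ => (1:ℝ)), ← Finset.sum_filter,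
      fin_filter_sum i (fun m => (c m)^2)]
    simp [hT]
  have hoff : ∀ i j : Fin n, i < j → St i j = -c i.val + T i.val := by
    intro i j hij
    rw [hSt' i j]
    have h1 : ∀ k : Fin n, a i k * a j k
        = (if k = i then -c i.val else 0) + (if k < i then (c k.val)^2 else 0) := by
      intro k
      by_cases h1 : k = i
      · subst h1
        have h2 : ¬ k = j := ne_of_lt hij
        simp only [ha, if_pos rfl, if_neg h2, if_pos hij, lt_irrefl, if_neg (lt_irrefl k)]
        simp
      · by_cases h2 : k < i
        · have h3 : ¬ k = j := ne_of_lt (lt_trans h2 hij)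
          have h4 : k < j := lt_trans h2 hij
          simp only [ha, if_neg h1, if_pos h2, if_neg h3, if_pos h4]
          ring
        · simp [ha, h1, h2]
    rw [Finset.sum_congr rfl (fun k _ => h1 k), Finset.sum_add_distrib,
      Finset.sum_ite_eq' Finset.univ i (fun _ => -c i.val), ← Finset.sum_filter,
      fin_filter_sum i (fun m => (c m)^2)]
    simp [hT]
  have hsymm : ∀ i j, St i j = St j i := by
    intro i j
    rw [hSt i j, hSt j i]
    exact integral_congr_ae (Filter.Eventually.of_forall fun ω => mul_comm _ _)
  have hTnonneg : ∀ m, 0 ≤ T m := fun m => Finset.sum_nonneg fun k _ => sq_nonneg _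
  -- entrywise formula
  have hentry : ∀ i j : Fin n, |S i j - St i j|
      = (if (i:ℕ) = (j:ℕ) then (n:ℝ)⁻¹ + T i.val else 0)
        + (if (i:ℕ) < (j:ℕ) then D i.val else 0) + (if (j:ℕ) < (i:ℕ) then D j.val else 0) := by
    intro i j
    rcases lt_trichotomy i j with h | h | h
    · have hij : i ≠ j := ne_of_lt h
      have hvij : (i:ℕ) < (j:ℕ) := h
      rw [hS i j, if_neg hij, hoff i j h]
      have hval : -(1/(n:ℝ)) - (-c i.val + T i.val) = D i.val := by
        rw [hD, one_div]; ring
      rw [hval, abs_of_nonneg]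
      · rw [if_neg (by omega : ¬ (i:ℕ) = (j:ℕ)), if_pos hvij,
          if_neg (by omega : ¬ (j:ℕ) < (i:ℕ))]
        ring
      · rw [hD]
        exact D_nonneg n i.val (by have := j.isLt; omega)
    · subst h
      rw [hS i i, if_pos rfl, hdiag i]
      have hval : ((n:ℝ) - 1)/n - (1 + T i.val) = -((n:ℝ)⁻¹ + T i.val) := by
        field_simp
        ring
      rw [hval, abs_neg, abs_of_nonneg (by positivity : (0:ℝ) ≤ (n:ℝ)⁻¹ + T i.val)]
      simp
    · have hij : i ≠ j := ne_of_gt h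
      have hvij : (j:ℕ) < (i:ℕ) := h
      rw [hS i j, if_neg hij, hsymm i j, hoff j i h]
      have hval : -(1/(n:ℝ)) - (-c j.val + T j.val) = D j.val := by
        rw [hD, one_div]; ring
      rw [hval, abs_of_nonneg]
      · rw [if_neg (by omega : ¬ (i:ℕ) = (j:ℕ)), if_neg (by omega : ¬ (i:ℕ) < (j:ℕ)),
          if_pos hvij]
        ring
      · rw [hD]
        exact D_nonneg n j.val (by have := i.isLt; omega)
  refine ⟨?_, part2 n hn⟩
  -- convert to range sums
  have step1 : ∀ i : Fin n, ∑ j : Fin n, |S i j - St i j|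
      = ∑ q ∈ Finset.range n, ((if (i:ℕ) = q then (n:ℝ)⁻¹ + T i.val else 0)
          + (if (i:ℕ) < q then D i.val else 0) + (if q < (i:ℕ) then D q else 0)) := by
    intro i
    rw [Finset.sum_congr rfl (fun j _ => hentry i j)]
    exact Fin.sum_univ_eq_sum_range (fun q => (if (i:ℕ) = q then (n:ℝ)⁻¹ + T i.val else 0)
      + (if (i:ℕ) < q then D i.val else 0) + (if q < (i:ℕ) then D q else 0)) n
  have step2 : ∑ i : Fin n, ∑ j : Fin n, |S i j - St i j|
      = ∑ p ∈ Finset.range n, ∑ q ∈ Finset.range n,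
          ((if p = q then (n:ℝ)⁻¹ + T p else 0)
            + (if p < q then D p else 0) + (if q < p then D q else 0)) := by
    rw [Finset.sum_congr rfl (fun i _ => step1 i)]
    exact Fin.sum_univ_eq_sum_range (fun p => ∑ q ∈ Finset.range n,
      ((if p = q then (n:ℝ)⁻¹ + T p else 0)
        + (if p < q then D p else 0) + (if q < p then D q else 0))) n
  -- evaluate the three pieces
  have hA : ∑ p ∈ Finset.range n, ∑ q ∈ Finset.range n,
      (if p = q then (n:ℝ)⁻¹ + T p else 0) = 1 + ∑ k ∈ Finset.range (n-1), c k := by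
    have h1 : ∀ p ∈ Finset.range n, (∑ q ∈ Finset.range n,
        if p = q then (n:ℝ)⁻¹ + T p else 0) = (n:ℝ)⁻¹ + T p := by
      intro p hp
      rw [Finset.sum_ite_eq (Finset.range n) p (fun _ => (n:ℝ)⁻¹ + T p), if_pos hp]
    rw [Finset.sum_congr rfl h1, Finset.sum_add_distrib, Finset.sum_const,
      Finset.card_range, nsmul_eq_mul, mul_inv_cancel₀ hn0]
    congr 1
    simp only [hT, hc]
    exact sum_T n hn
  have hBinner : ∀ p ∈ Finset.range n, (∑ q ∈ Finset.range n, if p < q then D p else 0)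
      = ((n - (p+1) : ℕ) : ℝ) * D p := by
    intro p hp
    rw [← Finset.sum_filter]
    have hfil : Finset.filter (fun q => p < q) (Finset.range n) = Finset.Ico (p+1) n := by
      ext x
      simp only [Finset.mem_filter, Finset.mem_range, Finset.mem_Ico]
      omega
    rw [hfil, Finset.sum_const, Nat.card_Ico, nsmul_eq_mul]
  have hB : ∑ p ∈ Finset.range n, ∑ q ∈ Finset.range n, (if p < q then D p else 0)
      = (∑ k ∈ Finset.range (n-1), c k) / 2 := by
    rw [Finset.sum_congr rfl hBinner]
    have hr : Finset.range n = Finset.range ((n-1)+1) := by congr 1; omega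
    rw [hr, Finset.sum_range_succ]
    have hlast : ((n - ((n-1)+1) : ℕ):ℝ) * D (n-1) = 0 := by
      have h0 : n - ((n-1)+1) = 0 := by omega
      rw [h0]
      simp
    rw [hlast, add_zero]
    have hcongr : ∀ p ∈ Finset.range (n-1), ((n - (p+1):ℕ):ℝ) * D p
        = ((n:ℝ) - 1 - p) * (((n:ℝ) - 1 - p)⁻¹ - (n:ℝ)⁻¹
            - ∑ k ∈ Finset.range p, ((((n:ℝ) - 1 - k))⁻¹)^2) := by
      intro p hp
      have hp' := Finset.mem_range.mp hp
      have hcast : ((n - (p+1) : ℕ):ℝ) = (n:ℝ) - 1 - p := by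
        rw [Nat.cast_sub (by omega : p + 1 ≤ n)]
        push_cast
        ring
      rw [hcast]
    rw [Finset.sum_congr rfl hcongr, sum_B n hn]
  have hC : ∑ p ∈ Finset.range n, ∑ q ∈ Finset.range n, (if q < p then D q else 0)
      = (∑ k ∈ Finset.range (n-1), c k) / 2 := by
    rw [Finset.sum_comm]
    exact hB
  rw [step2]
  simp only [Finset.sum_add_distrib]
  rw [hA, hB, hC]
  -- final bound
  rcases Nat.lt_or_ge n 2 with h2 | h2
  · have hn1 : n = 1 := by omega
    subst hn1
    norm_num
  · rw [show (∑ k ∈ Finset.range (n-1), c k)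
        = 1 + ∑ k ∈ Finset.Icc 2 (n-1), (1:ℝ)/k from (by simp only [hc]; exact H_eq n h2)]
    linarith
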